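/- Let L : ℝ^{n₁} × ℝ^{n₂} → ℝ be twice differentiable and invariant under all α-scale transformations, and let θ = (θ₁, θ₂) be a point where the Hessian of L is positive semi-definite and nonzero. Then for every M > 0 there exists α > 0 such that the trace of the Hessian matrix of L at T_α(θ) = (αθ₁, α⁻¹θ₂) is at least M. -/

import Mathlib

/-- The parameter space `ℝ^{n₁} × ℝ^{n₂}` with the Euclidean (`ℓ²`) norm on the
concatenated vector. -/
abbrev Param (n₁ n₂ : ℕ) :=
  WithLp 2 (EuclideanSpace ℝ (Fin n₁) × EuclideanSpace ℝ (Fin n₂))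

/-- Builds a parameter from its two components. -/
noncomputable def Param.mk {n₁ n₂ : ℕ}
    (u : EuclideanSpace ℝ (Fin n₁)) (v : EuclideanSpace ℝ (Fin n₂)) :
    Param n₁ n₂ :=
  (WithLp.equiv 2 (EuclideanSpace ℝ (Fin n₁) × EuclideanSpace ℝ (Fin n₂))).symm (u, v)

/-! ### Auxiliary definitions and lemmas -/

noncomputable instance instCSParam (n₁ n₂ : ℕ) : ContinuousSMul ℝ (Param n₁ n₂) := inferInstance

/-- The `α`-scale transformation as a continuous linear map. -/
noncomputable def Tc (n₁ n₂ : ℕ) (α : ℝ) : Param n₁ n₂ →L[ℝ] Param n₁ n₂ :=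
  ((WithLp.prodContinuousLinearEquiv 2 ℝ _ _).symm.toContinuousLinearMap.comp
    ((ContinuousLinearMap.prodMap (α • ContinuousLinearMap.id ℝ (EuclideanSpace ℝ (Fin n₁)))
      (α⁻¹ • ContinuousLinearMap.id ℝ (EuclideanSpace ℝ (Fin n₂)))))).comp
    (WithLp.prodContinuousLinearEquiv 2 ℝ _ _).toContinuousLinearMap

lemma Tc_mk (n₁ n₂ : ℕ) (α : ℝ) (u : EuclideanSpace ℝ (Fin n₁)) (v : EuclideanSpace ℝ (Fin n₂)) :
    Tc n₁ n₂ α (Param.mk u v) = Param.mk (α • u) (α⁻¹ • v) := rfl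

lemma smul_mk (n₁ n₂ : ℕ) (c : ℝ) (u : EuclideanSpace ℝ (Fin n₁)) (v : EuclideanSpace ℝ (Fin n₂)) :
    c • Param.mk u v = Param.mk (c • u) (c • v) := rfl

lemma mk_fst_snd (n₁ n₂ : ℕ) (x : Param n₁ n₂) :
    Param.mk (WithLp.equiv 2 _ x).1 (WithLp.equiv 2 _ x).2 = x := rfl

lemma Tc_Tc (n₁ n₂ : ℕ) (α : ℝ) (hα : 0 < α) (x : Param n₁ n₂) :
    Tc n₁ n₂ α (Tc n₁ n₂ α⁻¹ x) = x := by
  rw [← mk_fst_snd n₁ n₂ x, Tc_mk, Tc_mk]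
  simp [smul_smul, mul_inv_cancel₀ hα.ne', inv_inv, inv_mul_cancel₀ hα.ne']

lemma eucl_expand {n : ℕ} (u : EuclideanSpace ℝ (Fin n)) :
    u = ∑ i, u i • EuclideanSpace.single i 1 := by
  ext j
  have : (∑ i, u i • EuclideanSpace.single i 1 : EuclideanSpace ℝ (Fin n)) j
      = ∑ i, (u i • (EuclideanSpace.single i 1 : EuclideanSpace ℝ (Fin n))) j :=
    by rw [WithLp.ofLp_sum]; exact Finset.sum_apply j Finset.univ _
  rw [this]
  simp [EuclideanSpace.single_apply]

noncomputable def mkL1 (n₁ n₂ : ℕ) : EuclideanSpace ℝ (Fin n₁) →L[ℝ] Param n₁ n₂ :=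
  (WithLp.prodContinuousLinearEquiv 2 ℝ _ _).symm.toContinuousLinearMap.comp
    (ContinuousLinearMap.inl ℝ _ _)

noncomputable def mkL2 (n₁ n₂ : ℕ) : EuclideanSpace ℝ (Fin n₂) →L[ℝ] Param n₁ n₂ :=
  (WithLp.prodContinuousLinearEquiv 2 ℝ _ _).symm.toContinuousLinearMap.comp
    (ContinuousLinearMap.inr ℝ _ _)

lemma mkL1_apply (n₁ n₂ : ℕ) (u : EuclideanSpace ℝ (Fin n₁)) :
    mkL1 n₁ n₂ u = Param.mk u 0 := rfl

lemma mkL2_apply (n₁ n₂ : ℕ) (v : EuclideanSpace ℝ (Fin n₂)) :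
    mkL2 n₁ n₂ v = Param.mk 0 v := rfl

lemma mk_split (n₁ n₂ : ℕ) (u : EuclideanSpace ℝ (Fin n₁)) (v : EuclideanSpace ℝ (Fin n₂)) :
    Param.mk u v = Param.mk u 0 + Param.mk 0 v := by
  rw [← mkL1_apply, ← mkL2_apply]
  show (WithLp.prodContinuousLinearEquiv 2 ℝ _ _).symm (u, v) = _
  rw [show ((u, v) : EuclideanSpace ℝ (Fin n₁) × EuclideanSpace ℝ (Fin n₂))
    = (u, 0) + (0, v) by simp]
  rw [map_add]
  rfl

lemma param_expand (n₁ n₂ : ℕ) (x : Param n₁ n₂) :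
    x = (∑ i, (WithLp.equiv 2 _ x).1 i • Param.mk (EuclideanSpace.single i 1) 0)
      + ∑ j, (WithLp.equiv 2 _ x).2 j • Param.mk 0 (EuclideanSpace.single j 1) := by
  conv_lhs => rw [show x = Param.mk (WithLp.equiv 2 _ x).1 (WithLp.equiv 2 _ x).2 from rfl]
  rw [mk_split, ← mkL1_apply, ← mkL2_apply]
  conv_lhs => rw [eucl_expand (WithLp.equiv 2 _ x).1, eucl_expand (WithLp.equiv 2 _ x).2]
  rw [map_sum, map_sum]
  simp [mkL1_apply, mkL2_apply]

section
variable (n₁ n₂ : ℕ) (L : Param n₁ n₂ → ℝ)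
  (hdiff : Differentiable ℝ L) (hdiff2 : Differentiable ℝ (fderiv ℝ L))
  (hinv : ∀ α : ℝ, 0 < α → ∀ (u : EuclideanSpace ℝ (Fin n₁))
      (v : EuclideanSpace ℝ (Fin n₂)),
      L (Param.mk (α • u) (α⁻¹ • v)) = L (Param.mk u v))

include hinv in
lemma L_comp (α : ℝ) (hα : 0 < α) : L ∘ (Tc n₁ n₂ α) = L := by
  funext x
  rw [← mk_fst_snd n₁ n₂ x]
  exact hinv α hα _ _

include hdiff hinv in
lemma fderiv_comp_Tc (α : ℝ) (hα : 0 < α) (x : Param n₁ n₂) :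
    (fderiv ℝ L (Tc n₁ n₂ α x)).comp (Tc n₁ n₂ α) = fderiv ℝ L x := by
  have h1 : fderiv ℝ (L ∘ Tc n₁ n₂ α) x
      = (fderiv ℝ L (Tc n₁ n₂ α x)).comp (Tc n₁ n₂ α) := by
    rw [fderiv_comp x (hdiff _) (Tc n₁ n₂ α).differentiableAt,
      ContinuousLinearMap.fderiv]
  rw [← h1, L_comp n₁ n₂ L hinv α hα]

include hdiff hdiff2 hinv in
lemma snd_deriv_rel (α : ℝ) (hα : 0 < α) (x w w' : Param n₁ n₂) :
    fderiv ℝ (fderiv ℝ L) (Tc n₁ n₂ α x) (Tc n₁ n₂ α w) w'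
      = fderiv ℝ (fderiv ℝ L) x w (Tc n₁ n₂ α⁻¹ w') := by
  set pre : (Param n₁ n₂ →L[ℝ] ℝ) →L[ℝ] (Param n₁ n₂ →L[ℝ] ℝ) :=
    (ContinuousLinearMap.compL ℝ (Param n₁ n₂) (Param n₁ n₂) ℝ).flip (Tc n₁ n₂ α⁻¹) with hpre
  have hF : (fun x => fderiv ℝ L (Tc n₁ n₂ α x)) = fun x => pre (fderiv ℝ L x) := by
    funext y
    have h := fderiv_comp_Tc n₁ n₂ L hdiff hinv α hα y
    ext z
    have := congrArg (fun (f : Param n₁ n₂ →L[ℝ] ℝ) => f (Tc n₁ n₂ α⁻¹ z)) h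
    simpa [hpre, Tc_Tc n₁ n₂ α hα] using this
  have h1 : fderiv ℝ (fun x => fderiv ℝ L (Tc n₁ n₂ α x)) x
      = (fderiv ℝ (fderiv ℝ L) (Tc n₁ n₂ α x)).comp (Tc n₁ n₂ α) := by
    rw [show (fun x => fderiv ℝ L (Tc n₁ n₂ α x)) = (fderiv ℝ L) ∘ (Tc n₁ n₂ α) from rfl,
      fderiv_comp x (hdiff2 _) (Tc n₁ n₂ α).differentiableAt, ContinuousLinearMap.fderiv]
  have h2 : fderiv ℝ (fun x => fderiv ℝ L (Tc n₁ n₂ α x)) x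
      = pre.comp (fderiv ℝ (fderiv ℝ L) x) := by
    rw [hF, show (fun x => pre (fderiv ℝ L x)) = pre ∘ (fderiv ℝ L) from rfl,
      fderiv_comp x pre.differentiableAt (hdiff2 _), ContinuousLinearMap.fderiv]
  have h3 := h1.symm.trans h2
  have := congrArg (fun (f : Param n₁ n₂ →L[ℝ] Param n₁ n₂ →L[ℝ] ℝ) => f w w') h3
  simpa [hpre] using this
end

/-- If `L` is twice differentiable, invariant under all `α`-scale
transformations, and its Hessian at `θ = (θ₁, θ₂)` is positive semi-definite
and nonzero, then for every `M > 0` there is `α > 0` such that the trace of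
the Hessian matrix of `L` at `T_α(θ) = (αθ₁, α⁻¹θ₂)` (the sum of the diagonal
entries of the Hessian bilinear form in the standard basis) is at least `M`. -/
theorem hessian_trace_unbounded (n₁ n₂ : ℕ) (L : Param n₁ n₂ → ℝ)
    (hdiff : Differentiable ℝ L) (hdiff2 : Differentiable ℝ (fderiv ℝ L))
    (hinv : ∀ α : ℝ, 0 < α → ∀ (u : EuclideanSpace ℝ (Fin n₁))
      (v : EuclideanSpace ℝ (Fin n₂)),
      L (Param.mk (α • u) (α⁻¹ • v)) = L (Param.mk u v))
    (θ₁ : EuclideanSpace ℝ (Fin n₁)) (θ₂ : EuclideanSpace ℝ (Fin n₂))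
    (hpsd : ∀ w : Param n₁ n₂, 0 ≤ fderiv ℝ (fderiv ℝ L) (Param.mk θ₁ θ₂) w w)
    (hnz : fderiv ℝ (fderiv ℝ L) (Param.mk θ₁ θ₂) ≠ 0)
    (M : ℝ) (hM : 0 < M) :
    ∃ α : ℝ, 0 < α ∧
      M ≤ (∑ i : Fin n₁,
            fderiv ℝ (fderiv ℝ L) (Param.mk (α • θ₁) (α⁻¹ • θ₂))
              (Param.mk (EuclideanSpace.single i 1) 0)
              (Param.mk (EuclideanSpace.single i 1) 0)) +
          ∑ j : Fin n₂,
            fderiv ℝ (fderiv ℝ L) (Param.mk (α • θ₁) (α⁻¹ • θ₂))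
              (Param.mk 0 (EuclideanSpace.single j 1))
              (Param.mk 0 (EuclideanSpace.single j 1)) := by
  classical
  set H := fderiv ℝ (fderiv ℝ L) (Param.mk θ₁ θ₂) with hH
  -- symmetry of the Hessian
  have Hsymm : ∀ v w : Param n₁ n₂, H v w = H w v := by
    intro v w
    exact second_derivative_symmetric (fun y => (hdiff y).hasFDerivAt)
      (hdiff2 _).hasFDerivAt v w
  -- basis vectors
  set b1 : Fin n₁ → Param n₁ n₂ := fun i => Param.mk (EuclideanSpace.single i 1) 0 with hb1
  set b2 : Fin n₂ → Param n₁ n₂ := fun j => Param.mk 0 (EuclideanSpace.single j 1) with hb2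
  set A := ∑ i, H (b1 i) (b1 i) with hA
  set B := ∑ j, H (b2 j) (b2 j) with hB
  have hA0 : 0 ≤ A := Finset.sum_nonneg fun i _ => hpsd (b1 i)
  have hB0 : 0 ≤ B := Finset.sum_nonneg fun j _ => hpsd (b2 j)
  -- cross terms vanish when diagonal terms vanish
  have hcross : ∀ p q : Param n₁ n₂, H p p = 0 → H q q = 0 → H p q = 0 := by
    intro p q hp hq
    have h1 := hpsd (p + q)
    have h2 := hpsd (p - q)
    have hs := Hsymm q p
    simp only [map_add, map_sub, ContinuousLinearMap.add_apply,
      ContinuousLinearMap.sub_apply, hp, hq] at h1 h2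
    linarith
  -- A + B > 0
  have hABpos : 0 < A + B := by
    rcases lt_or_eq_of_le hA0 with h | h
    · linarith
    rcases lt_or_eq_of_le hB0 with h' | h'
    · linarith
    exfalso
    have hd1 : ∀ i, H (b1 i) (b1 i) = 0 := by
      intro i
      have := (Finset.sum_eq_zero_iff_of_nonneg
        (fun i (_ : i ∈ Finset.univ) => hpsd (b1 i))).mp h.symm i (Finset.mem_univ i)
      simpa using this
    have hd2 : ∀ j, H (b2 j) (b2 j) = 0 := by
      intro j
      have := (Finset.sum_eq_zero_iff_of_nonneg
        (fun j (_ : j ∈ Finset.univ) => hpsd (b2 j))).mp h'.symm j (Finset.mem_univ j)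
      simpa using this
    apply hnz
    ext x y
    rw [param_expand n₁ n₂ x, param_expand n₁ n₂ y]
    simp only [map_add, map_sum, map_smul, ContinuousLinearMap.add_apply,
      ContinuousLinearMap.sum_apply, ContinuousLinearMap.smul_apply,
      ContinuousLinearMap.coe_sum', ContinuousLinearMap.coe_smul',
      Finset.sum_apply, Pi.smul_apply, ← hb1, ← hb2]
    have z11 : ∀ i i', H (b1 i) (b1 i') = 0 := fun i i' => hcross _ _ (hd1 i) (hd1 i')
    have z12 : ∀ i j, H (b1 i) (b2 j) = 0 := fun i j => hcross _ _ (hd1 i) (hd2 j)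
    have z21 : ∀ j i, H (b2 j) (b1 i) = 0 := fun j i => hcross _ _ (hd2 j) (hd1 i)
    have z22 : ∀ j j', H (b2 j) (b2 j') = 0 := fun j j' => hcross _ _ (hd2 j) (hd2 j')
    simp only [hb1, hb2] at z11 z12 z21 z22
    simp [z11, z12, z21, z22]
  -- scaling of diagonal entries
  have key1 : ∀ α : ℝ, 0 < α → ∀ i : Fin n₁,
      fderiv ℝ (fderiv ℝ L) (Param.mk (α • θ₁) (α⁻¹ • θ₂)) (b1 i) (b1 i)
        = α⁻¹ * (α⁻¹ * H (b1 i) (b1 i)) := by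
    intro α hα i
    have h0 : Param.mk (α • θ₁) (α⁻¹ • θ₂) = Tc n₁ n₂ α (Param.mk θ₁ θ₂) :=
      (Tc_mk n₁ n₂ α θ₁ θ₂).symm
    have h1 : Tc n₁ n₂ α (α⁻¹ • b1 i) = b1 i := by
      rw [hb1]
      simp only [map_smul, Tc_mk]
      rw [smul_zero, smul_mk, smul_smul, inv_mul_cancel₀ hα.ne', one_smul, smul_zero]
    have h2 : Tc n₁ n₂ α⁻¹ (b1 i) = α⁻¹ • b1 i := by
      rw [hb1]
      simp only [Tc_mk]
      rw [smul_mk, smul_zero, smul_zero]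
    have hr := snd_deriv_rel n₁ n₂ L hdiff hdiff2 hinv α hα (Param.mk θ₁ θ₂)
      (α⁻¹ • b1 i) (b1 i)
    rw [h1, h2, ← h0, ← hH] at hr
    rw [hr]
    simp [map_smul]
  have key2 : ∀ α : ℝ, 0 < α → ∀ j : Fin n₂,
      fderiv ℝ (fderiv ℝ L) (Param.mk (α • θ₁) (α⁻¹ • θ₂)) (b2 j) (b2 j)
        = α * (α * H (b2 j) (b2 j)) := by
    intro α hα j
    have h0 : Param.mk (α • θ₁) (α⁻¹ • θ₂) = Tc n₁ n₂ α (Param.mk θ₁ θ₂) :=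
      (Tc_mk n₁ n₂ α θ₁ θ₂).symm
    have h1 : Tc n₁ n₂ α (α • b2 j) = b2 j := by
      rw [hb2]
      simp only [map_smul, Tc_mk]
      rw [smul_zero, smul_mk, smul_smul, mul_inv_cancel₀ hα.ne', one_smul, smul_zero]
    have h2 : Tc n₁ n₂ α⁻¹ (b2 j) = α • b2 j := by
      rw [hb2]
      simp only [Tc_mk]
      rw [smul_mk, smul_zero, inv_inv, smul_zero]
    have hr := snd_deriv_rel n₁ n₂ L hdiff hdiff2 hinv α hα (Param.mk θ₁ θ₂)
      (α • b2 j) (b2 j)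
    rw [h1, h2, ← h0, ← hH] at hr
    rw [hr]
    simp [map_smul]
  -- trace formula
  have trace_eq : ∀ α : ℝ, 0 < α →
      ((∑ i : Fin n₁, fderiv ℝ (fderiv ℝ L) (Param.mk (α • θ₁) (α⁻¹ • θ₂)) (b1 i) (b1 i))
        + ∑ j : Fin n₂, fderiv ℝ (fderiv ℝ L) (Param.mk (α • θ₁) (α⁻¹ • θ₂)) (b2 j) (b2 j))
        = α⁻¹ * α⁻¹ * A + α * α * B := by
    intro α hα
    rw [hA, hB, Finset.mul_sum, Finset.mul_sum]
    congr 1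
    · exact Finset.sum_congr rfl fun i _ => by rw [key1 α hα i]; ring
    · exact Finset.sum_congr rfl fun j _ => by rw [key2 α hα j]; ring
  -- choose α
  rcases (by rcases lt_or_eq_of_le hA0 with h | h; · exact Or.inl h
             rcases lt_or_eq_of_le hB0 with h' | h'; · exact Or.inr h'
             exfalso; rw [← h, ← h'] at hABpos; simp at hABpos : 0 < A ∨ 0 < B) with hApos | hBpos
  · set αv := Real.sqrt (A / M) with hαv
    have hα : (0:ℝ) < αv := Real.sqrt_pos.mpr (div_pos hApos hM)
    refine ⟨αv, hα, ?_⟩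
    show M ≤ (∑ i : Fin n₁,
        fderiv ℝ (fderiv ℝ L) (Param.mk (αv • θ₁) (αv⁻¹ • θ₂)) (b1 i) (b1 i)) +
        ∑ j : Fin n₂,
        fderiv ℝ (fderiv ℝ L) (Param.mk (αv • θ₁) (αv⁻¹ • θ₂)) (b2 j) (b2 j)
    rw [trace_eq αv hα]
    have hsq : αv * αv = A / M :=
      Real.mul_self_sqrt (le_of_lt (div_pos hApos hM))
    have h1 : αv⁻¹ * αv⁻¹ * A = M := by
      rw [← mul_inv, hsq]
      field_simp
    have h2 : 0 ≤ αv * αv * B := mul_nonneg (mul_nonneg hα.le hα.le) hB0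
    linarith
  · set αv := Real.sqrt (M / B) with hαv
    have hα : (0:ℝ) < αv := Real.sqrt_pos.mpr (div_pos hM hBpos)
    refine ⟨αv, hα, ?_⟩
    show M ≤ (∑ i : Fin n₁,
        fderiv ℝ (fderiv ℝ L) (Param.mk (αv • θ₁) (αv⁻¹ • θ₂)) (b1 i) (b1 i)) +
        ∑ j : Fin n₂,
        fderiv ℝ (fderiv ℝ L) (Param.mk (αv • θ₁) (αv⁻¹ • θ₂)) (b2 j) (b2 j)
    rw [trace_eq αv hα]
    have hsq : αv * αv = M / B :=
      Real.mul_self_sqrt (le_of_lt (div_pos hM hBpos))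
    have h1 : αv * αv * B = M := by
      rw [hsq]; field_simp
    have h2 : 0 ≤ αv⁻¹ * αv⁻¹ * A :=
      mul_nonneg (mul_nonneg (inv_nonneg.mpr hα.le) (inv_nonneg.mpr hα.le)) hA0
    linarith
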